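/- Let t' ≤ t be natural numbers, let α, β, κ, α', β' and, for each i ∈ {1,…,t}, α^i, β^i, κ^i be finitely supported sequences of non-negative integers, and let d, d', a and d^1,…,d^t, m^1,…,m^t be integers. Assume: (i) I(α+β+κ) = 3d − 1 + |β| − |κ|; (ii) for each i with 1 ≤ i ≤ t': Iα^i + m^i + Iβ^i + Iκ^i = 3d^i − 1 + |β^i| − |κ^i|; (iii) for each i with t' < i ≤ t: Iα^i + Iβ^i + m^i + Iκ^i = 3d^i + |β^i| − |κ^i|; (iv) α = α' + ∑_{i=1}^t α^i and β = β' + ∑_{i=1}^t β^i; (v) |κ| = 1 + ∑_{i=1}^t |κ^i| and Iκ = a + ∑_{i=1}^t Iκ^i; (vi) d = d' + ∑_{i=1}^t d^i; (vii) m^i = d^i − I(α^i + β^i) for all 1 ≤ i ≤ t; (viii) d = I(α + β). Then the valence condition 2d' + t' + |β'| = a + 2 and the divergence condition d' + ∑_{i=1}^t m^i = I(α' + β') both hold. -/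

import Mathlib

/-- For a finitely supported sequence `α` of non-negative integers,
`|α| := ∑_i α_i`. -/
def absSize (α : ℕ →₀ ℕ) : ℕ := α.sum fun _ n => n

/-- For a finitely supported sequence `α` of non-negative integers,
`Iα := ∑_i i·α_i`. -/
def Iwt (α : ℕ →₀ ℕ) : ℕ := α.sum fun i n => i * n

lemma Iwt_add (x y : ℕ →₀ ℕ) : Iwt (x + y) = Iwt x + Iwt y :=
  Finsupp.sum_add_index' (fun i => mul_zero i) (fun i => mul_add i)

lemma absSize_add (x y : ℕ →₀ ℕ) : absSize (x + y) = absSize x + absSize y :=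
  Finsupp.sum_add_index' (fun _ => rfl) (fun _ _ _ => rfl)

lemma Iwt_sum {ι : Type*} (s : Finset ι) (f : ι → (ℕ →₀ ℕ)) :
    Iwt (∑ i ∈ s, f i) = ∑ i ∈ s, Iwt (f i) := by
  classical
  induction s using Finset.induction with
  | empty => simp [Iwt]
  | insert _ _ h ih => simp [Finset.sum_insert h, Iwt_add, ih]

lemma absSize_sum {ι : Type*} (s : Finset ι) (f : ι → (ℕ →₀ ℕ)) :
    absSize (∑ i ∈ s, f i) = ∑ i ∈ s, absSize (f i) := by
  classical
  induction s using Finset.induction with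
  | empty => simp [absSize]
  | insert _ _ h ih => simp [Finset.sum_insert h, absSize_add, ih]

/-- In the proof of the Caporaso–Harris formula for Psi-floor diagrams, the
largest non-α vertex `v'` (of degree `d'` and Psi-power `a`, with `t`
adjacent components of which the first `t'` are attached by chosen edges of
weights `m^i`, and residual sequences `α', β'`) automatically satisfies the
valence condition `2d' + t' + |β'| = a + 2` and the divergence condition
`d' + ∑ m^i = I(α' + β')`. -/
theorem caporaso_harris_valence_and_divergence
    (t t' : ℕ) (htt : t' ≤ t)
    (α β κ α' β' : ℕ →₀ ℕ) (αi βi κi : Fin t → (ℕ →₀ ℕ))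
    (d d' a : ℤ) (di m : Fin t → ℤ)
    (h1 : (Iwt (α + β + κ) : ℤ) = 3 * d - 1 + (absSize β : ℤ) - (absSize κ : ℤ))
    (h2 : ∀ i : Fin t, (i : ℕ) < t' →
      (Iwt (αi i) : ℤ) + m i + (Iwt (βi i) : ℤ) + (Iwt (κi i) : ℤ)
        = 3 * di i - 1 + (absSize (βi i) : ℤ) - (absSize (κi i) : ℤ))
    (h3 : ∀ i : Fin t, t' ≤ (i : ℕ) →
      (Iwt (αi i) : ℤ) + (Iwt (βi i) : ℤ) + m i + (Iwt (κi i) : ℤ)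
        = 3 * di i + (absSize (βi i) : ℤ) - (absSize (κi i) : ℤ))
    (h4 : α = α' + ∑ i, αi i)
    (h5 : β = β' + ∑ i, βi i)
    (h6 : (absSize κ : ℤ) = 1 + ∑ i, (absSize (κi i) : ℤ))
    (h7 : (Iwt κ : ℤ) = a + ∑ i, (Iwt (κi i) : ℤ))
    (h8 : d = d' + ∑ i, di i)
    (h9 : ∀ i : Fin t, m i = di i - (Iwt (αi i + βi i) : ℤ))
    (h10 : d = (Iwt (α + β) : ℤ)) :
    2 * d' + (t' : ℤ) + (absSize β' : ℤ) = a + 2 ∧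
      d' + ∑ i, m i = (Iwt (α' + β') : ℤ) := by
  classical
  -- additivity facts (cast to ℤ)
  have hIα : (Iwt α : ℤ) = (Iwt α' : ℤ) + ∑ i, (Iwt (αi i) : ℤ) := by
    rw [h4, Iwt_add, Iwt_sum]; push_cast; ring
  have hIβ : (Iwt β : ℤ) = (Iwt β' : ℤ) + ∑ i, (Iwt (βi i) : ℤ) := by
    rw [h5, Iwt_add, Iwt_sum]; push_cast; ring
  have hSβ : (absSize β : ℤ) = (absSize β' : ℤ) + ∑ i, (absSize (βi i) : ℤ) := by
    rw [h5, absSize_add, absSize_sum]; push_cast; ring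
  have h1' : (Iwt α : ℤ) + (Iwt β : ℤ) + (Iwt κ : ℤ)
      = 3 * d - 1 + (absSize β : ℤ) - (absSize κ : ℤ) := by
    rw [Iwt_add, Iwt_add] at h1; push_cast at h1; linarith
  have h10' : d = (Iwt α : ℤ) + (Iwt β : ℤ) := by
    rw [Iwt_add] at h10; push_cast at h10; exact h10
  -- sum of the per-component equations
  have hcard : ∑ i : Fin t, (if (i : ℕ) < t' then (1 : ℤ) else 0) = (t' : ℤ) := by
    rw [Finset.sum_boole]
    congr 1
    have : (Finset.univ.filter fun i : Fin t => (i : ℕ) < t') =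
        (Finset.range t').attachFin (fun m hm => lt_of_lt_of_le (Finset.mem_range.mp hm) htt) := by
      ext i
      simp [Finset.mem_attachFin]
    rw [this, Finset.card_attachFin, Finset.card_range]
  have hsum : ∑ i, ((Iwt (αi i) : ℤ) + m i + (Iwt (βi i) : ℤ) + (Iwt (κi i) : ℤ))
      = ∑ i, (3 * di i - (if (i : ℕ) < t' then (1 : ℤ) else 0)
          + (absSize (βi i) : ℤ) - (absSize (κi i) : ℤ)) := by
    refine Finset.sum_congr rfl fun i _ => ?_
    by_cases h : (i : ℕ) < t'
    · simp only [if_pos h]; exact h2 i h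
    · simp only [if_neg h]
      have := h3 i (le_of_not_gt h)
      linarith
  simp only [Finset.sum_add_distrib, Finset.sum_sub_distrib, ← Finset.mul_sum, hcard] at hsum
  -- sum of h9
  have hm : ∑ i, m i = (∑ i, di i) - (∑ i, (Iwt (αi i) : ℤ)) - (∑ i, (Iwt (βi i) : ℤ)) := by
    have : ∑ i, m i = ∑ i, (di i - ((Iwt (αi i) : ℤ) + (Iwt (βi i) : ℤ))) := by
      refine Finset.sum_congr rfl fun i _ => ?_
      rw [h9 i, Iwt_add]; push_cast; ring
    rw [this, Finset.sum_sub_distrib, Finset.sum_add_distrib]; ring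
  have hIα'β' : (Iwt (α' + β') : ℤ) = (Iwt α' : ℤ) + (Iwt β' : ℤ) := by
    rw [Iwt_add]; push_cast; ring
  constructor
  · linarith
  · rw [hIα'β']; linarith
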